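/- The Minkowski–Stieltjes measure μ is singular with respect to Lebesgue measure on [0,1] (equivalently, ?'(x) = 0 for Lebesgue-almost every x). -/

import Mathlib

open MeasureTheory Set

/-- The Gauss map `x ↦ 1/x mod 1` (with `0 ↦ 0`). -/
noncomputable def gaussMap (x : ℝ) : ℝ := if x = 0 then 0 else Int.fract x⁻¹

/-- The `(k+1)`-st continued fraction partial quotient `a_{k+1}(x)`. -/
noncomputable def cfDigit (k : ℕ) (x : ℝ) : ℕ := ⌊(gaussMap^[k] x)⁻¹⌋₊

/-- `cfSum n x = a_1(x) + ⋯ + a_n(x)`. -/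
noncomputable def cfSum (n : ℕ) (x : ℝ) : ℕ := ∑ i ∈ Finset.range n, cfDigit i x

/-- Minkowski's question mark function, defined by Salem's series
`?(x) = Σ_{k≥1} (-1)^{k-1} 2^{1-(a_1+⋯+a_k)}`, which is a finite sum for rational `x`
(the terms are cut off once the Gauss-map orbit reaches `0`). -/
noncomputable def mink (x : ℝ) : ℝ :=
  ∑' k : ℕ, if gaussMap^[k] x = 0 then 0 else
    (-1 : ℝ) ^ k * (2 : ℝ) ^ ((1 : ℤ) - (cfSum (k + 1) x : ℤ))

namespace MinkSing

noncomputable def term (x : ℝ) (k : ℕ) : ℝ :=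
  if gaussMap^[k] x = 0 then 0 else
    (-1 : ℝ) ^ k * (2 : ℝ) ^ ((1 : ℤ) - (cfSum (k + 1) x : ℤ))

lemma mink_eq_tsum (x : ℝ) : mink x = ∑' k, term x k := rfl

lemma gauss_zero : gaussMap 0 = 0 := by simp [gaussMap]

lemma gauss_apply {x : ℝ} (hx : x ≠ 0) : gaussMap x = Int.fract x⁻¹ := if_neg hx

lemma gauss_mem (x : ℝ) : gaussMap x ∈ Ico (0:ℝ) 1 := by
  unfold gaussMap
  split
  · exact ⟨le_refl _, one_pos⟩
  · exact ⟨Int.fract_nonneg _, Int.fract_lt_one _⟩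

lemma orbit_zero (k : ℕ) : gaussMap^[k] (0:ℝ) = 0 := Function.iterate_fixed gauss_zero k

lemma orbit_mem {x : ℝ} (hx : x ∈ Icc (0:ℝ) 1) (k : ℕ) : gaussMap^[k] x ∈ Icc (0:ℝ) 1 := by
  induction k with
  | zero => exact hx
  | succ n ih =>
      rw [Function.iterate_succ_apply']
      exact Ico_subset_Icc_self (gauss_mem _)

lemma orbit_ne_zero {x : ℝ} {k i : ℕ} (h : gaussMap^[k] x ≠ 0) (hik : i ≤ k) :
    gaussMap^[i] x ≠ 0 := by
  intro h0
  apply h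
  obtain ⟨j, rfl⟩ := Nat.exists_eq_add_of_le hik
  rw [Nat.add_comm, Function.iterate_add_apply, h0, orbit_zero]

lemma cfDigit_pos {x : ℝ} (hx : x ∈ Icc (0:ℝ) 1) {k : ℕ} (h : gaussMap^[k] x ≠ 0) :
    1 ≤ cfDigit k x := by
  have hm := orbit_mem hx k
  have h1 : 0 < gaussMap^[k] x := lt_of_le_of_ne hm.1 (Ne.symm h)
  have h2 : (1:ℝ) ≤ (gaussMap^[k] x)⁻¹ := (one_le_inv₀ h1).mpr hm.2
  exact Nat.le_floor (by exact_mod_cast h2)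

lemma cfSum_ge {x : ℝ} (hx : x ∈ Icc (0:ℝ) 1) {k : ℕ} (h : gaussMap^[k] x ≠ 0) :
    k + 1 ≤ cfSum (k+1) x := by
  have : ∀ i ∈ Finset.range (k+1), 1 ≤ cfDigit i x := fun i hi =>
    cfDigit_pos hx (orbit_ne_zero h (Nat.lt_succ_iff.mp (Finset.mem_range.mp hi)))
  calc k + 1 = ∑ _i ∈ Finset.range (k+1), 1 := by simp
    _ ≤ cfSum (k+1) x := Finset.sum_le_sum this

lemma term_abs_le {x : ℝ} (hx : x ∈ Icc (0:ℝ) 1) (k : ℕ) : |term x k| ≤ (2⁻¹:ℝ)^k := by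
  unfold term
  split
  · simp only [abs_zero]
    positivity
  · rename_i h
    rw [abs_mul, abs_pow, abs_neg, abs_one, one_pow, one_mul,
      abs_of_pos (zpow_pos two_pos _)]
    have hS : (k:ℤ) + 1 ≤ (cfSum (k+1) x : ℤ) := by exact_mod_cast cfSum_ge hx h
    have : ((2:ℝ))^((1:ℤ) - (cfSum (k + 1) x : ℤ)) ≤ (2:ℝ)^(-(k:ℤ)) := by
      apply zpow_le_zpow_right₀ (by norm_num)
      omega
    calc (2:ℝ)^((1:ℤ) - (cfSum (k + 1) x : ℤ)) ≤ (2:ℝ)^(-(k:ℤ)) := this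
      _ = (2⁻¹:ℝ)^k := by rw [zpow_neg, ← zpow_natCast, ← inv_zpow, zpow_natCast]

lemma summable_term {x : ℝ} (hx : x ∈ Icc (0:ℝ) 1) : Summable (term x) := by
  apply Summable.of_abs
  apply Summable.of_nonneg_of_le (fun k => abs_nonneg _) (term_abs_le hx)
  exact summable_geometric_of_lt_one (by norm_num) (by norm_num)

lemma mink_zero : mink 0 = 0 := by
  rw [mink_eq_tsum]
  convert tsum_zero with k
  unfold term
  rw [if_pos (orbit_zero k)]

lemma mink_one : mink 1 = 1 := by
  rw [mink_eq_tsum]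
  rw [tsum_eq_single 0]
  · unfold term
    rw [if_neg (by norm_num)]
    have : cfSum 1 (1:ℝ) = 1 := by
      simp [cfSum, Finset.sum_range_one, cfDigit, Nat.floor_eq_iff]
    rw [this]
    norm_num
  · intro k hk
    obtain ⟨j, rfl⟩ := Nat.exists_eq_succ_of_ne_zero hk
    unfold term
    rw [if_pos]
    have h1 : gaussMap 1 = 0 := by
      rw [gauss_apply one_ne_zero]; norm_num
    rw [Function.iterate_succ_apply, h1, orbit_zero]

lemma minkT₀ (a : ℕ) (ha : 1 ≤ a) {y : ℝ} (hy : y ∈ Ico (0:ℝ) 1) :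
    mink (((a:ℝ) + y)⁻¹) = 2^((1:ℤ) - a) - 2^(-(a:ℤ)) * mink y := by
  have hapos : (0:ℝ) < a := by exact_mod_cast Nat.lt_of_lt_of_le Nat.zero_lt_one ha
  have hay : (1:ℝ) ≤ (a:ℝ) + y := by
    have : (1:ℝ) ≤ (a:ℝ) := by exact_mod_cast ha
    linarith [hy.1]
  have haypos : (0:ℝ) < (a:ℝ) + y := by linarith
  set x := ((a:ℝ) + y)⁻¹ with hxdef
  have hx_ne : x ≠ 0 := inv_ne_zero (ne_of_gt haypos)
  have hx_mem : x ∈ Icc (0:ℝ) 1 := by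
    constructor
    · positivity
    · rw [hxdef]
      exact inv_le_one_of_one_le₀ hay
  have hxinv : x⁻¹ = (a:ℝ) + y := by rw [hxdef, inv_inv]
  have hGx : gaussMap x = y := by
    rw [gauss_apply hx_ne, hxinv]
    have : ((a:ℝ) + y) = ((a:ℤ):ℝ) + y := by push_cast; ring
    rw [this, Int.fract_intCast_add, Int.fract_eq_self.mpr ⟨hy.1, hy.2⟩]
  have hD0 : cfDigit 0 x = a := by
    unfold cfDigit
    rw [Function.iterate_zero_apply, hxinv]
    rw [Nat.floor_eq_iff (by positivity)]
    constructor
    · linarith [hy.1]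
    · push_cast; linarith [hy.2]
  have hiter : ∀ k, gaussMap^[k+1] x = gaussMap^[k] y := by
    intro k; rw [Function.iterate_succ_apply, hGx]
  have hDshift : ∀ i, cfDigit (i+1) x = cfDigit i y := by
    intro i; unfold cfDigit; rw [hiter i]
  have hsum : ∀ k, cfSum (k+2) x = a + cfSum (k+1) y := by
    intro k
    unfold cfSum
    rw [Finset.sum_range_succ']
    simp only [hDshift, hD0]
    rw [Nat.add_comm]
  have hterm : ∀ k, term x (k+1) = (-(2:ℝ)^(-(a:ℤ))) * term y k := by
    intro k
    unfold term
    rw [hiter k]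
    split
    · ring
    · rename_i hne
      have : ((cfSum (k + 1 + 1) x : ℤ)) = (a:ℤ) + (cfSum (k+1) y : ℤ) := by
        exact_mod_cast hsum k
      rw [this]
      have h2 : (2:ℝ) ≠ 0 := two_ne_zero
      rw [show (1:ℤ) - ((a:ℤ) + (cfSum (k+1) y : ℤ)) = (-(a:ℤ)) + ((1:ℤ) - (cfSum (k+1) y : ℤ)) by ring]
      rw [zpow_add₀ h2, pow_succ]
      ring
  have hsummable : Summable (term x) := summable_term hx_mem
  rw [mink_eq_tsum, hsummable.tsum_eq_zero_add]
  have ht0 : term x 0 = 2^((1:ℤ) - a) := by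
    unfold term
    rw [if_neg (by simpa using hx_ne)]
    have : cfSum 1 x = a := by
      unfold cfSum; rw [Finset.sum_range_one, hD0]
    rw [this]
    norm_num
  rw [ht0]
  have : ∑' k, term x (k+1) = (-(2:ℝ)^(-(a:ℤ))) * ∑' k, term y k := by
    rw [← tsum_mul_left]
    exact tsum_congr hterm
  rw [this, ← mink_eq_tsum]
  ring

lemma minkT (a : ℕ) (ha : 1 ≤ a) {y : ℝ} (hy : y ∈ Icc (0:ℝ) 1) :
    mink (((a:ℝ) + y)⁻¹) = 2^((1:ℤ) - a) - 2^(-(a:ℤ)) * mink y := by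
  rcases lt_or_eq_of_le hy.2 with h1 | h1
  · exact minkT₀ a ha ⟨hy.1, h1⟩
  · subst h1
    have : ((a:ℝ) + 1) = ((a+1:ℕ):ℝ) + 0 := by push_cast; ring
    rw [this, minkT₀ (a+1) (by omega) (by norm_num), mink_zero, mink_one]
    push_cast
    rw [show (1:ℤ) - ((a:ℤ)+1) = -(a:ℤ) by ring]
    rw [show (1:ℤ) - (a:ℤ) = 1 + (-(a:ℤ)) by ring, zpow_add₀ (two_ne_zero) 1 (-(a:ℤ))]
    norm_num
    rw [two_mul]
    ring


/-- `T a t = 1/(a+t)`. -/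
noncomputable def Tm (a : ℕ) (t : ℝ) : ℝ := ((a:ℝ) + t)⁻¹

/-- Two-step map for a pair of (shifted) digits: `U (b,c) = T (b+1) ∘ T (c+1)`. -/
noncomputable def Um (p : ℕ × ℕ) (t : ℝ) : ℝ := Tm (p.1 + 1) (Tm (p.2 + 1) t)

/-- Composition along a list of pairs. -/
noncomputable def gm : List (ℕ × ℕ) → ℝ → ℝ
  | [], t => t
  | p :: L, t => Um p (gm L t)

lemma Tm_mem {a : ℕ} (ha : 1 ≤ a) {t : ℝ} (ht : t ∈ Icc (0:ℝ) 1) : Tm a t ∈ Icc (0:ℝ) 1 := by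
  have h1 : (1:ℝ) ≤ (a:ℝ) + t := by
    have : (1:ℝ) ≤ (a:ℝ) := by exact_mod_cast ha
    linarith [ht.1]
  constructor
  · unfold Tm; positivity
  · exact inv_le_one_of_one_le₀ h1

lemma Tm_lt {a : ℕ} (ha : 1 ≤ a) {u v : ℝ} (hu : 0 ≤ u) (huv : u < v) : Tm a v < Tm a u := by
  have ha' : (1:ℝ) ≤ (a:ℝ) := by exact_mod_cast ha
  apply inv_strictAnti₀ <;> linarith

lemma Tm_image {a : ℕ} (ha : 1 ≤ a) {u v : ℝ} (hu : 0 ≤ u) (huv : u < v) :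
    Tm a '' Ioo u v = Ioo (Tm a v) (Tm a u) := by
  have ha' : (1:ℝ) ≤ (a:ℝ) := by exact_mod_cast ha
  have hau : (0:ℝ) < (a:ℝ) + u := by linarith
  have hav : (0:ℝ) < (a:ℝ) + v := by linarith
  ext x
  constructor
  · rintro ⟨t, ⟨ht1, ht2⟩, rfl⟩
    exact ⟨Tm_lt ha (by linarith) ht2, Tm_lt ha hu ht1⟩
  · rintro ⟨h1, h2⟩
    have hTv : 0 < Tm a v := by unfold Tm; positivity
    have hx : 0 < x := lt_trans hTv h1
    have key1 : x⁻¹ > (a:ℝ) + u := by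
      unfold Tm at h2
      calc (a:ℝ) + u = (((a:ℝ)+u)⁻¹)⁻¹ := by rw [inv_inv]
        _ < x⁻¹ := inv_strictAnti₀ hx h2
    have key2 : x⁻¹ < (a:ℝ) + v := by
      unfold Tm at h1
      calc x⁻¹ < (((a:ℝ)+v)⁻¹)⁻¹ := inv_strictAnti₀ (by positivity) h1
        _ = (a:ℝ) + v := inv_inv _
    refine ⟨x⁻¹ - a, ⟨by linarith, by linarith⟩, ?_⟩
    unfold Tm
    rw [add_sub_cancel, inv_inv]

lemma Um_mem (p : ℕ × ℕ) {t : ℝ} (ht : t ∈ Icc (0:ℝ) 1) : Um p t ∈ Icc (0:ℝ) 1 :=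
  Tm_mem (Nat.le_add_left 1 p.1) (Tm_mem (Nat.le_add_left 1 p.2) ht)

lemma Um_lt (p : ℕ × ℕ) {u v : ℝ} (hu : 0 ≤ u) (hv : v ≤ 1) (huv : u < v) : Um p u < Um p v := by
  have h1 := Tm_lt (a := p.2 + 1) (Nat.le_add_left 1 p.2) hu huv
  have h2 : 0 ≤ Tm (p.2+1) v := (Tm_mem (Nat.le_add_left 1 p.2) ⟨by linarith, hv⟩).1
  exact Tm_lt (Nat.le_add_left 1 p.1) h2 h1

lemma Um_image (p : ℕ × ℕ) {u v : ℝ} (hu : 0 ≤ u) (hv : v ≤ 1) (huv : u < v) :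
    Um p '' Ioo u v = Ioo (Um p u) (Um p v) := by
  have : Um p '' Ioo u v = Tm (p.1+1) '' (Tm (p.2+1) '' Ioo u v) := by
    rw [← Set.image_comp]; rfl
  rw [this, Tm_image (Nat.le_add_left 1 p.2) hu huv]
  have h2 : 0 ≤ Tm (p.2+1) v := (Tm_mem (Nat.le_add_left 1 p.2) ⟨by linarith, hv⟩).1
  rw [Tm_image (Nat.le_add_left 1 p.1) h2 (Tm_lt (Nat.le_add_left 1 p.2) hu huv)]
  rfl

lemma gm_mem (L : List (ℕ × ℕ)) {t : ℝ} (ht : t ∈ Icc (0:ℝ) 1) : gm L t ∈ Icc (0:ℝ) 1 := by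
  induction L with
  | nil => exact ht
  | cons p L ih => exact Um_mem p ih

lemma gm_lt (L : List (ℕ × ℕ)) {u v : ℝ} (hu : u ∈ Icc (0:ℝ) 1) (hv : v ∈ Icc (0:ℝ) 1)
    (huv : u < v) : gm L u < gm L v := by
  induction L with
  | nil => exact huv
  | cons p L ih =>
      exact Um_lt p (gm_mem L hu).1 (gm_mem L hv).2 ih

lemma gm_image (L : List (ℕ × ℕ)) {u v : ℝ} (hu : u ∈ Icc (0:ℝ) 1) (hv : v ∈ Icc (0:ℝ) 1)
    (huv : u < v) : gm L '' Ioo u v = Ioo (gm L u) (gm L v) := by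
  induction L with
  | nil => simp [gm]
  | cons p L ih =>
      show Um p ∘ gm L '' Ioo u v = _
      rw [Set.image_comp, ih, Um_image p (gm_mem L hu).1 (gm_mem L hv).2 (gm_lt L hu hv huv)]
      rfl

lemma gm_append (L L' : List (ℕ × ℕ)) (t : ℝ) : gm (L ++ L') t = gm L (gm L' t) := by
  induction L with
  | nil => rfl
  | cons p L ih => show Um p (gm (L ++ L') t) = _ ; rw [ih]; rfl

/-- Möbius coefficients `(p,q,p',q')` with `gm L t = (p+p't)/(q+q't)`. -/
noncomputable def co : List (ℕ × ℕ) → ℝ × ℝ × ℝ × ℝ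
  | [] => (0, 1, 1, 0)
  | (b, c) :: L =>
      let r := co L
      let p := r.1; let q := r.2.1; let p' := r.2.2.1; let q' := r.2.2.2
      (((c:ℝ)+1)*q + p, ((b:ℝ)+1)*(((c:ℝ)+1)*q + p) + q,
        ((c:ℝ)+1)*q' + p', ((b:ℝ)+1)*(((c:ℝ)+1)*q' + p') + q')

lemma co_cons (b c : ℕ) (L : List (ℕ × ℕ)) :
    co ((b,c) :: L) = (((c:ℝ)+1)*(co L).2.1 + (co L).1,
      ((b:ℝ)+1)*(((c:ℝ)+1)*(co L).2.1 + (co L).1) + (co L).2.1,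
      ((c:ℝ)+1)*(co L).2.2.2 + (co L).2.2.1,
      ((b:ℝ)+1)*(((c:ℝ)+1)*(co L).2.2.2 + (co L).2.2.1) + (co L).2.2.2) := rfl

lemma co_spec (L : List (ℕ × ℕ)) :
    0 ≤ (co L).1 ∧ 1 ≤ (co L).2.1 ∧ 0 ≤ (co L).2.2.1 ∧ 0 ≤ (co L).2.2.2 ∧
      (co L).2.2.1 * (co L).2.1 = (co L).1 * (co L).2.2.2 + 1 ∧
      ∀ t ∈ Icc (0:ℝ) 1, gm L t = ((co L).1 + (co L).2.2.1 * t) / ((co L).2.1 + (co L).2.2.2 * t) := by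
  induction L with
  | nil =>
      refine ⟨le_refl _, ?_, ?_, le_refl _, ?_, ?_⟩
      · simp [co]
      · simp [co]
      · simp [co]
      · intro t ht
        simp [co, gm]
  | cons pc L ih =>
      obtain ⟨b, c⟩ := pc
      obtain ⟨hp, hq, hp', hq', hdet, hval⟩ := ih
      rcases hco : co L with ⟨p, q, p', q'⟩
      rw [hco] at hp hq hp' hq' hdet hval
      simp only [co_cons, hco]
      dsimp only at hp hq hp' hq' hdet hval ⊢
      have hb : (0:ℝ) ≤ (b:ℝ) := Nat.cast_nonneg b
      have hc : (0:ℝ) ≤ (c:ℝ) := Nat.cast_nonneg c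
      have hN1 : (0:ℝ) < ((c:ℝ)+1)*q + p := by nlinarith
      have hN1' : (0:ℝ) ≤ ((c:ℝ)+1)*q' + p' := by nlinarith
      refine ⟨by nlinarith, by nlinarith, by nlinarith, by nlinarith, by nlinarith, ?_⟩
      intro t ht
      have ht0 := ht.1
      have hden : (0:ℝ) < q + q' * t := by nlinarith
      show Um (b, c) (gm L t) = _
      unfold Um Tm
      rw [hval t ht]
      have e1 : (↑(c+1):ℝ) + (p + p' * t) / (q + q' * t)
          = ((((c:ℝ)+1)*q + p) + (((c:ℝ)+1)*q' + p')*t)/(q + q'*t) := by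
        field_simp
        push_cast
        ring
      have hnum : (0:ℝ) < (((c:ℝ)+1)*q + p) + (((c:ℝ)+1)*q' + p')*t := by nlinarith
      rw [e1, inv_div]
      have e2 : (↑(b+1):ℝ) + (q + q'*t)/((((c:ℝ)+1)*q + p) + (((c:ℝ)+1)*q' + p')*t)
          = ((((b:ℝ)+1)*(((c:ℝ)+1)*q + p) + q) + ((((b:ℝ)+1)*(((c:ℝ)+1)*q' + p') + q')*t))
            /((((c:ℝ)+1)*q + p) + (((c:ℝ)+1)*q' + p')*t) := by
        field_simp
        push_cast
        ring
      rw [e2, inv_div]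


/-! ### Cylinders -/

/-- The (open) cylinder set associated to a list of digit pairs. -/
noncomputable def Cyl (L : List (ℕ × ℕ)) : Set ℝ := gm L '' Ioo 0 1

lemma Cyl_eq_Ioo (L : List (ℕ × ℕ)) : Cyl L = Ioo (gm L 0) (gm L 1) :=
  gm_image L (by norm_num) (by norm_num) one_pos

lemma measurableSet_Cyl (L : List (ℕ × ℕ)) : MeasurableSet (Cyl L) := by
  rw [Cyl_eq_Ioo]; exact measurableSet_Ioo

lemma volume_Cyl (L : List (ℕ × ℕ)) : volume (Cyl L) = ENNReal.ofReal (gm L 1 - gm L 0) := by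
  rw [Cyl_eq_Ioo, Real.volume_Ioo]

lemma Cyl_nil : Cyl [] = Ioo 0 1 := by
  simp [Cyl, gm]

lemma Cyl_append (L : List (ℕ × ℕ)) (p : ℕ × ℕ) :
    Cyl (L ++ [p]) = gm L '' Ioo (Um p 0) (Um p 1) := by
  unfold Cyl
  have h1 : ∀ t, gm (L ++ [p]) t = gm L (Um p t) := fun t => gm_append L [p] t
  have h2 : gm (L ++ [p]) '' Ioo 0 1 = gm L '' (Um p '' Ioo 0 1) := by
    rw [← Set.image_comp]
    exact Set.image_congr fun t _ => h1 t
  rw [h2, Um_image p (le_refl _) (le_refl _) one_pos]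

lemma Cyl_append_subset (L : List (ℕ × ℕ)) (p : ℕ × ℕ) : Cyl (L ++ [p]) ⊆ Cyl L := by
  rw [Cyl_append]
  apply Set.image_mono
  intro t ht
  have h0 := (Um_mem p (⟨le_refl _, zero_le_one⟩ : (0:ℝ) ∈ Icc (0:ℝ) 1)).1
  have h1 := (Um_mem p (⟨zero_le_one, le_refl _⟩ : (1:ℝ) ∈ Icc (0:ℝ) 1)).2
  exact ⟨lt_of_le_of_lt h0 ht.1, lt_of_lt_of_le ht.2 h1⟩

lemma gm_diff (L : List (ℕ × ℕ)) {α β : ℝ} (hα : α ∈ Icc (0:ℝ) 1) (hβ : β ∈ Icc (0:ℝ) 1) :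
    gm L β - gm L α = (β - α) /
      (((co L).2.1 + (co L).2.2.2 * α) * ((co L).2.1 + (co L).2.2.2 * β)) := by
  obtain ⟨hp, hq, hp', hq', hdet, hval⟩ := co_spec L
  set p := (co L).1; set q := (co L).2.1; set p' := (co L).2.2.1; set q' := (co L).2.2.2
  have hda : (0:ℝ) < q + q' * α := by nlinarith [hα.1]
  have hdb : (0:ℝ) < q + q' * β := by nlinarith [hβ.1]
  have hnum : (p + p'*β)*(q + q'*α) - (q + q'*β)*(p + p'*α) = β - α := by
    linear_combination (β - α) * hdet
  rw [hval β hβ, hval α hα, div_sub_div _ _ hdb.ne' hda.ne', hnum, mul_comm (q + q'*β)]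

lemma volume_Cyl_pair (L : List (ℕ × ℕ)) :
    volume (Cyl (L ++ [(0,0)])) ≤ ENNReal.ofReal (1/6) * volume (Cyl L) := by
  have hU0 : Um (0,0) (0:ℝ) = 1/2 := by unfold Um Tm; norm_num
  have hU1 : Um (0,0) (1:ℝ) = 2/3 := by unfold Um Tm; norm_num
  have himg : Cyl (L ++ [(0,0)]) = Ioo (gm L (1/2)) (gm L (2/3)) := by
    rw [Cyl_append, hU0, hU1]
    exact gm_image L (by norm_num) (by norm_num) (by norm_num)
  rw [himg, Real.volume_Ioo, volume_Cyl, ← ENNReal.ofReal_mul (by norm_num)]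
  apply ENNReal.ofReal_le_ofReal
  obtain ⟨hp, hq, hp', hq', hdet, hval⟩ := co_spec L
  set p := (co L).1; set q := (co L).2.1; set p' := (co L).2.2.1; set q' := (co L).2.2.2
  rw [gm_diff L (by norm_num) (by norm_num), gm_diff L (by norm_num) (by norm_num)]
  have h1 : (0:ℝ) < q + q' * (1/2) := by nlinarith
  have h2 : (0:ℝ) < q + q' * (2/3) := by nlinarith
  rw [show (2/3 - 1/2:ℝ) = 1/6 by norm_num, show ((1:ℝ) - 0) = 1 by norm_num,
    show q + q' * 0 = q by ring]
  have e : (1:ℝ)/6 * (1 / (q * (q + q' * 1))) = (1/6) / (q * (q + q' * 1)) := by ring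
  rw [e, div_le_div_iff₀ (by nlinarith) (by nlinarith)]
  nlinarith [mul_nonneg hq' hq', mul_nonneg (mul_nonneg hq' hq') hq']

/-! ### The weight of a cylinder and its `μ`-measure -/

noncomputable def wL : List (ℕ × ℕ) → ℝ
  | [] => 1
  | (b, c) :: L => (2:ℝ)^(-((b:ℤ) + (c:ℤ) + 2)) * wL L

lemma wL_pos (L : List (ℕ × ℕ)) : 0 < wL L := by
  induction L with
  | nil => norm_num [wL]
  | cons p L ih =>
      obtain ⟨b, c⟩ := p
      unfold wL
      positivity

lemma mink_gm (L : List (ℕ × ℕ)) :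
    ∃ cst : ℝ, ∀ t ∈ Icc (0:ℝ) 1, mink (gm L t) = cst + wL L * mink t := by
  induction L with
  | nil => exact ⟨0, fun t _ => by simp [gm, wL]⟩
  | cons pc L ih =>
      obtain ⟨b, c⟩ := pc
      obtain ⟨cst, hcst⟩ := ih
      refine ⟨2^((1:ℤ) - (b+1:ℕ)) - 2^(-((b+1:ℕ):ℤ)) * (2^((1:ℤ) - (c+1:ℕ))
        - 2^(-((c+1:ℕ):ℤ)) * cst), ?_⟩
      intro t ht
      have hu : gm L t ∈ Icc (0:ℝ) 1 := gm_mem L ht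
      have hz : Tm (c+1) (gm L t) ∈ Icc (0:ℝ) 1 := Tm_mem (Nat.le_add_left 1 c) hu
      show mink (Tm (b+1) (Tm (c+1) (gm L t))) = _
      have e1 : mink (Tm (b+1) (Tm (c+1) (gm L t)))
          = 2^((1:ℤ) - (b+1:ℕ)) - 2^(-((b+1:ℕ):ℤ)) * mink (Tm (c+1) (gm L t)) :=
        minkT (b+1) (by omega) hz
      have e2 : mink (Tm (c+1) (gm L t))
          = 2^((1:ℤ) - (c+1:ℕ)) - 2^(-((c+1:ℕ):ℤ)) * mink (gm L t) :=
        minkT (c+1) (by omega) hu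
      rw [e1, e2, hcst t ht]
      show _ = _ + (2:ℝ)^(-((b:ℤ) + (c:ℤ) + 2)) * wL L * mink t
      have e3 : (2:ℝ)^(-((b:ℤ) + (c:ℤ) + 2)) = 2^(-((b+1:ℕ):ℤ)) * 2^(-((c+1:ℕ):ℤ)) := by
        have h' : -((b:ℤ) + (c:ℤ) + 2) = -((b+1:ℕ):ℤ) + -((c+1:ℕ):ℤ) := by push_cast; ring
        rw [h', zpow_add₀ (two_ne_zero : (2:ℝ) ≠ 0)]
      rw [e3]
      ring

lemma mink_gm_diff (L : List (ℕ × ℕ)) : mink (gm L 1) - mink (gm L 0) = wL L := by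
  obtain ⟨cst, hcst⟩ := mink_gm L
  rw [hcst 1 (by norm_num), hcst 0 (by norm_num), mink_one, mink_zero]
  ring

lemma ofReal_sub_le (a b : ℝ) :
    ENNReal.ofReal a - ENNReal.ofReal b ≤ ENNReal.ofReal (a - b) := by
  rcases le_or_gt 0 b with hb | hb
  · rw [← ENNReal.ofReal_sub a hb]
  · rw [ENNReal.ofReal_of_nonpos hb.le, tsub_zero]
    exact ENNReal.ofReal_le_ofReal (by linarith)

/-! ### Digits of points in cylinders, and reconstruction -/

lemma Tm_ne_zero {a : ℕ} (ha : 1 ≤ a) {y : ℝ} (hy : 0 ≤ y) : Tm a y ≠ 0 := by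
  have h1 : (1:ℝ) ≤ (a:ℝ) := by exact_mod_cast ha
  have : (0:ℝ) < (a:ℝ) + y := by linarith
  exact inv_ne_zero this.ne'

lemma Tm_gauss {a : ℕ} (ha : 1 ≤ a) {y : ℝ} (hy : y ∈ Ico (0:ℝ) 1) :
    gaussMap (Tm a y) = y := by
  have h1 : (1:ℝ) ≤ (a:ℝ) := by exact_mod_cast ha
  have hpos : (0:ℝ) < (a:ℝ) + y := by linarith [hy.1]
  rw [gauss_apply (Tm_ne_zero ha hy.1)]
  unfold Tm
  rw [inv_inv]
  have : ((a:ℝ) + y) = ((a:ℤ):ℝ) + y := by push_cast; ring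
  rw [this, Int.fract_intCast_add, Int.fract_eq_self.mpr ⟨hy.1, hy.2⟩]

lemma Tm_digit {a : ℕ} (ha : 1 ≤ a) {y : ℝ} (hy : y ∈ Ico (0:ℝ) 1) :
    cfDigit 0 (Tm a y) = a := by
  have h1 : (1:ℝ) ≤ (a:ℝ) := by exact_mod_cast ha
  unfold cfDigit
  rw [Function.iterate_zero_apply]
  unfold Tm
  rw [inv_inv, Nat.floor_eq_iff (by linarith [hy.1] : (0:ℝ) ≤ (a:ℝ) + y)]
  constructor
  · linarith [hy.1]
  · push_cast; linarith [hy.2]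

lemma irr_ne_zero {x : ℝ} (h : Irrational x) : x ≠ 0 := by
  simpa using h.ne_int 0

lemma gauss_irr {x : ℝ} (hx : x ∈ Ioo (0:ℝ) 1) (h : Irrational x) :
    gaussMap x ∈ Ioo (0:ℝ) 1 ∧ Irrational (gaussMap x) := by
  have hne : x ≠ 0 := ne_of_gt hx.1
  have hirr : Irrational (gaussMap x) := by
    rw [gauss_apply hne]
    have h2 : Irrational (x⁻¹ - (⌊x⁻¹⌋ : ℝ)) := (h.inv).sub_intCast _
    rwa [Int.self_sub_floor] at h2
  have hmem := gauss_mem x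
  exact ⟨⟨lt_of_le_of_ne hmem.1 (Ne.symm (irr_ne_zero hirr)), hmem.2⟩, hirr⟩

lemma orbit_irr {x : ℝ} (hx : x ∈ Ioo (0:ℝ) 1) (h : Irrational x) (k : ℕ) :
    gaussMap^[k] x ∈ Ioo (0:ℝ) 1 ∧ Irrational (gaussMap^[k] x) := by
  induction k with
  | zero => exact ⟨hx, h⟩
  | succ n ih =>
      rw [Function.iterate_succ_apply']
      exact gauss_irr ih.1 ih.2

lemma x_eq_T {x : ℝ} (hx : x ∈ Ioo (0:ℝ) 1) : Tm (cfDigit 0 x) (gaussMap x) = x := by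
  have hne : x ≠ 0 := ne_of_gt hx.1
  have hinv : (0:ℝ) ≤ x⁻¹ := inv_nonneg.mpr hx.1.le
  unfold Tm cfDigit
  rw [Function.iterate_zero_apply, gauss_apply hne,
    natCast_floor_eq_intCast_floor hinv, Int.floor_add_fract, inv_inv]

lemma cfDigit_succ (k : ℕ) (x : ℝ) : cfDigit (k+1) x = cfDigit k (gaussMap x) := by
  unfold cfDigit
  rw [Function.iterate_succ_apply]

lemma cfDigit_add_two (k : ℕ) (x : ℝ) : cfDigit (k+2) x = cfDigit k (gaussMap^[2] x) := by
  unfold cfDigit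
  rw [Function.iterate_add_apply]

/-- The `i`-th pair of (shifted) digits of `x`. -/
noncomputable def digitPair (x : ℝ) (i : ℕ) : ℕ × ℕ :=
  (cfDigit (2*i) x - 1, cfDigit (2*i+1) x - 1)

lemma gauss_two (x : ℝ) : gaussMap^[2] x = gaussMap (gaussMap x) := rfl

lemma x_eq_Um {x : ℝ} (hx : x ∈ Ioo (0:ℝ) 1) (h : Irrational x) :
    Um (digitPair x 0) (gaussMap^[2] x) = x := by
  have h1 := gauss_irr hx h
  have hD0 : 1 ≤ cfDigit 0 x :=
    cfDigit_pos (Ioo_subset_Icc_self hx) (by simpa using irr_ne_zero h)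
  have hD1 : 1 ≤ cfDigit 1 x := by
    rw [cfDigit_succ]
    exact cfDigit_pos (Ioo_subset_Icc_self h1.1) (by simpa using irr_ne_zero h1.2)
  unfold Um digitPair
  simp only [Nat.mul_zero, Nat.zero_add, Nat.mul_one]
  rw [Nat.sub_add_cancel hD0, Nat.sub_add_cancel hD1, gauss_two]
  have e1 : cfDigit 1 x = cfDigit 0 (gaussMap x) := cfDigit_succ 0 x
  rw [e1, x_eq_T h1.1, x_eq_T hx]

lemma recon : ∀ (m : ℕ) (x : ℝ), x ∈ Ioo (0:ℝ) 1 → Irrational x →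
    gm (List.ofFn fun i : Fin m => digitPair x i) (gaussMap^[2*m] x) = x := by
  intro m
  induction m with
  | zero => intro x hx hirr; simp [gm]
  | succ m ih =>
      intro x hx hirr
      have h1 := gauss_irr hx hirr
      have h2 := gauss_irr h1.1 h1.2
      rw [← gauss_two] at h2
      rw [List.ofFn_succ]
      have hfun : (fun i : Fin m => digitPair x (i.succ : Fin (m+1)))
          = fun i : Fin m => digitPair (gaussMap^[2] x) i := by
        funext i
        unfold digitPair
        have e1 : 2*((i.succ : Fin (m+1)) : ℕ) = 2*(i:ℕ) + 2 := by
          simp [Fin.val_succ]; ring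
        have e2 : 2*((i.succ : Fin (m+1)) : ℕ) + 1 = (2*(i:ℕ) + 1) + 2 := by
          simp [Fin.val_succ]; ring
        rw [e2, e1, cfDigit_add_two, cfDigit_add_two]
      have htail : gaussMap^[2*(m+1)] x = gaussMap^[2*m] (gaussMap^[2] x) := by
        rw [show 2*(m+1) = 2*m + 2 by ring, Function.iterate_add_apply]
      show Um (digitPair x (0 : Fin (m+1))) (gm _ (gaussMap^[2*(m+1)] x)) = x
      rw [hfun, htail]
      have : digitPair x ((0 : Fin (m+1)) : ℕ) = digitPair x 0 := rfl
      rw [this, ih (gaussMap^[2] x) h2.1 h2.2]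
      exact x_eq_Um hx hirr

lemma mem_Cyl_of_irr {x : ℝ} (hx : x ∈ Ioo (0:ℝ) 1) (h : Irrational x) (m : ℕ) :
    x ∈ Cyl (List.ofFn fun i : Fin m => digitPair x i) := by
  refine ⟨gaussMap^[2*m] x, (orbit_irr hx h (2*m)).1, recon m x hx h⟩

lemma Um_digit_fst (p : ℕ × ℕ) {y : ℝ} (hy : y ∈ Ioo (0:ℝ) 1) :
    cfDigit 0 (Um p y) = p.1 + 1 := by
  have hz : Tm (p.2+1) y ∈ Icc (0:ℝ) 1 := Tm_mem (Nat.le_add_left 1 p.2) (Ioo_subset_Icc_self hy)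
  have hzlt : Tm (p.2+1) y < 1 := by
    have h2 : Tm (p.2+1) y < Tm (p.2+1) 0 := Tm_lt (Nat.le_add_left 1 p.2) (le_refl _) hy.1
    have h3 : Tm (p.2+1) (0:ℝ) ≤ 1 := (Tm_mem (Nat.le_add_left 1 p.2) (by norm_num)).2
    linarith
  exact Tm_digit (Nat.le_add_left 1 p.1) ⟨hz.1, hzlt⟩

lemma Um_gauss (p : ℕ × ℕ) {y : ℝ} (hy : y ∈ Ioo (0:ℝ) 1) :
    gaussMap (Um p y) = Tm (p.2+1) y := by
  have hz : Tm (p.2+1) y ∈ Icc (0:ℝ) 1 := Tm_mem (Nat.le_add_left 1 p.2) (Ioo_subset_Icc_self hy)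
  have hzlt : Tm (p.2+1) y < 1 := by
    have h2 : Tm (p.2+1) y < Tm (p.2+1) 0 := Tm_lt (Nat.le_add_left 1 p.2) (le_refl _) hy.1
    have h3 : Tm (p.2+1) (0:ℝ) ≤ 1 := (Tm_mem (Nat.le_add_left 1 p.2) (by norm_num)).2
    linarith
  exact Tm_gauss (Nat.le_add_left 1 p.1) ⟨hz.1, hzlt⟩

lemma Um_digit_snd (p : ℕ × ℕ) {y : ℝ} (hy : y ∈ Ioo (0:ℝ) 1) :
    cfDigit 1 (Um p y) = p.2 + 1 := by
  rw [cfDigit_succ, Um_gauss p hy]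
  exact Tm_digit (Nat.le_add_left 1 p.2) ⟨hy.1.le, hy.2⟩

lemma Cyl_append_disjoint (L : List (ℕ × ℕ)) {p p' : ℕ × ℕ} (hpp : p ≠ p') :
    Disjoint (Cyl (L ++ [p])) (Cyl (L ++ [p'])) := by
  rw [Set.disjoint_left]
  intro x hx hx'
  have hUIoo : ∀ r : ℕ × ℕ, Um r '' Ioo (0:ℝ) 1 ⊆ Ioo (0:ℝ) 1 := by
    rintro r z ⟨t, ht, rfl⟩
    have h0 := (Um_mem r (⟨le_refl _, zero_le_one⟩ : (0:ℝ) ∈ Icc (0:ℝ) 1)).1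
    have h1 := (Um_mem r (⟨zero_le_one, le_refl _⟩ : (1:ℝ) ∈ Icc (0:ℝ) 1)).2
    have := Um_lt r (le_refl _) ht.2.le ht.1
    have := Um_lt r ht.1.le (le_refl _) ht.2
    constructor <;> [linarith; linarith]
  have key : ∀ r : ℕ × ℕ, Cyl (L ++ [r]) = gm L '' (Um r '' Ioo 0 1) := by
    intro r
    rw [Cyl_append, Um_image r (le_refl _) (le_refl _) one_pos]
  rw [key p] at hx
  rw [key p'] at hx'
  obtain ⟨s, hs, hgs⟩ := hx
  obtain ⟨s', hs', hgs'⟩ := hx'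
  have hss : s = s' := by
    by_contra hne
    rcases lt_or_gt_of_ne hne with hlt | hlt
    · have := gm_lt L (Ioo_subset_Icc_self (hUIoo p hs)) (Ioo_subset_Icc_self (hUIoo p' hs')) hlt
      rw [hgs, hgs'] at this
      exact lt_irrefl x this
    · have := gm_lt L (Ioo_subset_Icc_self (hUIoo p' hs')) (Ioo_subset_Icc_self (hUIoo p hs)) hlt
      rw [hgs, hgs'] at this
      exact lt_irrefl x this
  subst hss
  obtain ⟨y, hy, hUy⟩ := hs
  obtain ⟨y', hy', hUy'⟩ := hs'
  apply hpp
  have e1 : p.1 + 1 = p'.1 + 1 := by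
    rw [← Um_digit_fst p hy, ← Um_digit_fst p' hy', hUy, hUy']
  have e2 : p.2 + 1 = p'.2 + 1 := by
    rw [← Um_digit_snd p hy, ← Um_digit_snd p' hy', hUy, hUy']
  exact Prod.ext (by omega) (by omega)

/-! ### Sums over digit strings -/

/-- Number of `(0,0)` pairs (i.e. pairs of CF digits `(1,1)`). -/
noncomputable def Zv {m : ℕ} (v : Fin m → ℕ × ℕ) : ℕ :=
  ∑ i, if v i = (0,0) then 1 else 0

lemma tsum_snoc (m : ℕ) (F : (Fin (m+1) → ℕ × ℕ) → ENNReal) :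
    ∑' v : Fin (m+1) → ℕ × ℕ, F v
      = ∑' w : Fin m → ℕ × ℕ, ∑' p : ℕ × ℕ, F (Fin.snoc w p) := by
  rw [← Equiv.tsum_eq (Fin.snocEquiv (fun _ : Fin (m+1) => ℕ × ℕ)) F]
  rw [ENNReal.tsum_prod']
  rw [ENNReal.tsum_comm]
  rfl

lemma ofFn_snoc {m : ℕ} (w : Fin m → ℕ × ℕ) (p : ℕ × ℕ) :
    List.ofFn (Fin.snoc w p) = List.ofFn w ++ [p] := by
  rw [List.ofFn_succ', List.concat_eq_append, Fin.snoc_last]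
  congr 2
  funext i
  simp

lemma Zv_snoc {m : ℕ} (w : Fin m → ℕ × ℕ) (p : ℕ × ℕ) :
    Zv (Fin.snoc w p) = Zv w + (if p = (0,0) then 1 else 0) := by
  unfold Zv
  rw [Fin.sum_univ_castSucc]
  congr 1
  · apply Finset.sum_congr rfl
    intro i _
    rw [Fin.snoc_castSucc]
  · rw [Fin.snoc_last]

lemma inner_step (L : List (ℕ × ℕ)) :
    ∑' p : ℕ × ℕ, (ENNReal.ofReal (13/10))^(if p = (0,0) then 1 else 0)
        * volume (Cyl (L ++ [p]))
      ≤ ENNReal.ofReal (21/20) * volume (Cyl L) := by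
  have hsplit : ∀ p : ℕ × ℕ, (ENNReal.ofReal (13/10))^(if p = (0,0) then 1 else 0)
      * volume (Cyl (L ++ [p]))
      = volume (Cyl (L ++ [p]))
        + (if p = (0,0) then ENNReal.ofReal (3/10) * volume (Cyl (L ++ [p])) else 0) := by
    intro p
    by_cases hp : p = (0,0)
    · rw [if_pos hp, if_pos hp, pow_one]
      have : ENNReal.ofReal (13/10) = 1 + ENNReal.ofReal (3/10) := by
        rw [← ENNReal.ofReal_one, ← ENNReal.ofReal_add] <;> norm_num
      rw [this, add_mul, one_mul]
    · rw [if_neg hp, if_neg hp, pow_zero, one_mul, add_zero]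
  rw [tsum_congr hsplit, ENNReal.tsum_add]
  have h1 : ∑' p : ℕ × ℕ, volume (Cyl (L ++ [p])) ≤ volume (Cyl L) := by
    rw [← measure_iUnion (fun p p' hpp => Cyl_append_disjoint L hpp)
      (fun p => measurableSet_Cyl _)]
    exact measure_mono (Set.iUnion_subset fun p => Cyl_append_subset L p)
  have h2 : ∑' p : ℕ × ℕ, (if p = (0,0) then ENNReal.ofReal (3/10)
      * volume (Cyl (L ++ [p])) else 0)
      = ENNReal.ofReal (3/10) * volume (Cyl (L ++ [(0,0)])) := by
    rw [tsum_eq_single ((0,0) : ℕ × ℕ)]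
    · rw [if_pos rfl]
    · intro p hp
      rw [if_neg hp]
  rw [h2]
  have h3 : ENNReal.ofReal (3/10) * volume (Cyl (L ++ [(0,0)]))
      ≤ ENNReal.ofReal (1/20) * volume (Cyl L) := by
    calc ENNReal.ofReal (3/10) * volume (Cyl (L ++ [(0,0)]))
        ≤ ENNReal.ofReal (3/10) * (ENNReal.ofReal (1/6) * volume (Cyl L)) :=
          mul_le_mul_right (volume_Cyl_pair L) _
      _ = ENNReal.ofReal (1/20) * volume (Cyl L) := by
          rw [← mul_assoc, ← ENNReal.ofReal_mul (by norm_num)]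
          norm_num
  calc (∑' p : ℕ × ℕ, volume (Cyl (L ++ [p]))) + ENNReal.ofReal (3/10)
        * volume (Cyl (L ++ [(0,0)]))
      ≤ volume (Cyl L) + ENNReal.ofReal (1/20) * volume (Cyl L) := add_le_add h1 h3
    _ = (1 + ENNReal.ofReal (1/20)) * volume (Cyl L) := by rw [add_mul, one_mul]
    _ = ENNReal.ofReal (21/20) * volume (Cyl L) := by
        rw [← ENNReal.ofReal_one, ← ENNReal.ofReal_add] <;> norm_num

lemma H_bound : ∀ m : ℕ,
    ∑' v : Fin m → ℕ × ℕ, (ENNReal.ofReal (13/10))^(Zv v) * volume (Cyl (List.ofFn v))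
      ≤ (ENNReal.ofReal (21/20))^m := by
  intro m
  induction m with
  | zero =>
      rw [tsum_eq_single (fun i : Fin 0 => ((0,0) : ℕ × ℕ))]
      · have hz : Zv (fun i : Fin 0 => ((0,0) : ℕ × ℕ)) = 0 := rfl
        rw [hz, pow_zero, pow_zero, one_mul]
        rw [List.ofFn_zero, Cyl_nil, Real.volume_Ioo]
        norm_num
      · intro v hv
        exact absurd (funext fun i => absurd i.2 (by omega)) hv
  | succ m ih =>
      rw [tsum_snoc]
      have hin : ∀ w : Fin m → ℕ × ℕ,
          ∑' p : ℕ × ℕ, (ENNReal.ofReal (13/10))^(Zv (Fin.snoc w p))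
            * volume (Cyl (List.ofFn (Fin.snoc w p)))
          ≤ (ENNReal.ofReal (13/10))^(Zv w)
            * (ENNReal.ofReal (21/20) * volume (Cyl (List.ofFn w))) := by
        intro w
        have : ∀ p : ℕ × ℕ, (ENNReal.ofReal (13/10))^(Zv (Fin.snoc w p))
            * volume (Cyl (List.ofFn (Fin.snoc w p)))
            = (ENNReal.ofReal (13/10))^(Zv w)
              * ((ENNReal.ofReal (13/10))^(if p = (0,0) then 1 else 0)
                * volume (Cyl (List.ofFn w ++ [p]))) := by
          intro p
          rw [Zv_snoc, ofFn_snoc, pow_add, mul_assoc]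
        rw [tsum_congr this, ENNReal.tsum_mul_left]
        exact mul_le_mul_right (inner_step (List.ofFn w)) _
      calc ∑' w : Fin m → ℕ × ℕ, ∑' p : ℕ × ℕ, (ENNReal.ofReal (13/10))^(Zv (Fin.snoc w p))
            * volume (Cyl (List.ofFn (Fin.snoc w p)))
          ≤ ∑' w : Fin m → ℕ × ℕ, (ENNReal.ofReal (13/10))^(Zv w)
            * (ENNReal.ofReal (21/20) * volume (Cyl (List.ofFn w))) :=
            ENNReal.tsum_le_tsum hin
        _ = ENNReal.ofReal (21/20) * ∑' w : Fin m → ℕ × ℕ, (ENNReal.ofReal (13/10))^(Zv w)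
            * volume (Cyl (List.ofFn w)) := by
            rw [← ENNReal.tsum_mul_left]
            apply tsum_congr
            intro w
            ring
        _ ≤ ENNReal.ofReal (21/20) * (ENNReal.ofReal (21/20))^m := mul_le_mul_right ih _
        _ = (ENNReal.ofReal (21/20))^(m+1) := by rw [pow_succ]; ring

lemma tsum_prod_pow (φ : ℕ × ℕ → ENNReal) : ∀ m : ℕ,
    ∑' v : Fin m → ℕ × ℕ, ∏ i, φ (v i) = (∑' p : ℕ × ℕ, φ p)^m := by
  intro m
  induction m with
  | zero =>
      rw [tsum_eq_single (fun i : Fin 0 => ((0,0) : ℕ × ℕ))]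
      · simp
      · intro v hv
        exact absurd (funext fun i => absurd i.2 (by omega)) hv
  | succ m ih =>
      rw [tsum_snoc]
      have key : ∀ (w : Fin m → ℕ × ℕ) (p : ℕ × ℕ),
          ∏ i, φ (Fin.snoc (α := fun _ => ℕ × ℕ) w p i) = (∏ i, φ (w i)) * φ p := by
        intro w p
        simp [Fin.prod_univ_castSucc, Fin.snoc_castSucc, Fin.snoc_last]
      have h1 : ∀ w : Fin m → ℕ × ℕ,
          (∑' p : ℕ × ℕ, ∏ i, φ (Fin.snoc (α := fun _ => ℕ × ℕ) w p i))
            = (∏ i, φ (w i)) * ∑' p : ℕ × ℕ, φ p := by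
        intro w
        rw [← ENNReal.tsum_mul_left]
        exact tsum_congr fun p => key w p
      rw [tsum_congr h1, ENNReal.tsum_mul_right, ih, pow_succ]

/-! ### Weights on the μ side -/

/-- Per-pair weight for the μ-side Chernoff bound. -/
noncomputable def phiMu (p : ℕ × ℕ) : ENNReal :=
  (if p = (0,0) then ENNReal.ofReal (3/4) else 1)
    * ENNReal.ofReal ((2:ℝ)^(-((p.1:ℤ) + (p.2:ℤ) + 2)))

lemma wL_ofFn : ∀ (m : ℕ) (v : Fin m → ℕ × ℕ),
    wL (List.ofFn v) = ∏ i, (2:ℝ)^(-(((v i).1:ℤ) + ((v i).2:ℤ) + 2)) := by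
  intro m
  induction m with
  | zero => intro v; simp [wL]
  | succ m ih =>
      intro v
      rw [List.ofFn_succ, Fin.prod_univ_succ]
      have : wL (v 0 :: List.ofFn fun i : Fin m => v i.succ)
          = (2:ℝ)^(-(((v 0).1:ℤ) + ((v 0).2:ℤ) + 2)) * wL (List.ofFn fun i : Fin m => v i.succ) := by
        rcases h : v 0 with ⟨b, c⟩
        rw [wL]
      rw [this, ih]

lemma prod_ite_pow {m : ℕ} (v : Fin m → ℕ × ℕ) (c : ENNReal) :
    (∏ i, if v i = (0,0) then c else 1) = c ^ (Zv v) := by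
  unfold Zv
  rw [← Finset.prod_pow_eq_pow_sum]
  apply Finset.prod_congr rfl
  intro i _
  by_cases h : v i = (0,0) <;> simp [h]

lemma prod_phiMu {m : ℕ} (v : Fin m → ℕ × ℕ) :
    ∏ i, phiMu (v i)
      = (ENNReal.ofReal (3/4))^(Zv v) * ENNReal.ofReal (wL (List.ofFn v)) := by
  unfold phiMu
  rw [Finset.prod_mul_distrib, prod_ite_pow, wL_ofFn,
    ENNReal.ofReal_prod_of_nonneg (fun i _ => by positivity)]

lemma tsum_phiMu : ∑' p : ℕ × ℕ, phiMu p = ENNReal.ofReal (15/16) := by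
  have base_eq : ∀ p : ℕ × ℕ, ENNReal.ofReal ((2:ℝ)^(-((p.1:ℤ) + (p.2:ℤ) + 2)))
      = ENNReal.ofReal ((1/2:ℝ)^(p.1+1)) * ENNReal.ofReal ((1/2:ℝ)^(p.2+1)) := by
    intro p
    rw [← ENNReal.ofReal_mul (by positivity)]
    congr 1
    rw [← pow_add]
    have : (2:ℝ)^(-((p.1:ℤ) + (p.2:ℤ) + 2)) = ((2:ℝ)^((p.1 + 1) + (p.2 + 1) : ℕ))⁻¹ := by
      rw [← zpow_natCast (2:ℝ) ((p.1 + 1) + (p.2 + 1)), ← zpow_neg]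
      congr 1
      push_cast
      ring
    rw [this, one_div, inv_pow]
  have hsum_base : ∑' p : ℕ × ℕ, ENNReal.ofReal ((2:ℝ)^(-((p.1:ℤ) + (p.2:ℤ) + 2))) = 1 := by
    rw [tsum_congr base_eq, ENNReal.tsum_prod']
    have hgeo : ∑' b : ℕ, ENNReal.ofReal ((1/2:ℝ)^(b+1)) = 1 := by
      have h2 : ∀ b : ℕ, ENNReal.ofReal ((1/2:ℝ)^(b+1)) = (ENNReal.ofReal (1/2))^(b+1) :=
        fun b => ENNReal.ofReal_pow (by norm_num) _
      rw [tsum_congr h2, ENNReal.tsum_geometric_add_one]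
      have h3 : (1:ENNReal) - ENNReal.ofReal (1/2) = ENNReal.ofReal (1/2) := by
        rw [← ENNReal.ofReal_one, ← ENNReal.ofReal_sub _ (by norm_num)]
        norm_num
      rw [h3, ENNReal.mul_inv_cancel (by simp) (by simp)]
    calc ∑' (b : ℕ) (c : ℕ), ENNReal.ofReal ((1/2:ℝ)^(b+1)) * ENNReal.ofReal ((1/2:ℝ)^(c+1))
        = ∑' b : ℕ, ENNReal.ofReal ((1/2:ℝ)^(b+1)) * ∑' c : ℕ, ENNReal.ofReal ((1/2:ℝ)^(c+1)) := by
          apply tsum_congr; intro b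
          rw [ENNReal.tsum_mul_left]
      _ = ∑' b : ℕ, ENNReal.ofReal ((1/2:ℝ)^(b+1)) * 1 := by rw [hgeo]
      _ = 1 := by simp only [mul_one]; exact hgeo
  have hpoint : ∀ p : ℕ × ℕ, phiMu p + (if p = (0,0) then ENNReal.ofReal (1/16) else 0)
      = ENNReal.ofReal ((2:ℝ)^(-((p.1:ℤ) + (p.2:ℤ) + 2))) := by
    intro p
    by_cases h : p = (0,0)
    · subst h
      unfold phiMu
      rw [if_pos rfl, if_pos rfl]
      rw [show ((2:ℝ)^(-(((0:ℕ):ℤ) + ((0:ℕ):ℤ) + 2)) = (1/4:ℝ)) by norm_num]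
      rw [← ENNReal.ofReal_mul (by norm_num), ← ENNReal.ofReal_add (by norm_num) (by norm_num)]
      norm_num
    · unfold phiMu
      rw [if_neg h, if_neg h, one_mul, add_zero]
  have : ∑' p : ℕ × ℕ, (phiMu p + (if p = (0,0) then ENNReal.ofReal (1/16) else 0))
      = ∑' p : ℕ × ℕ, ENNReal.ofReal ((2:ℝ)^(-((p.1:ℤ) + (p.2:ℤ) + 2))) := tsum_congr hpoint
  rw [ENNReal.tsum_add, hsum_base] at this
  have hsingle : ∑' p : ℕ × ℕ, (if p = (0,0) then ENNReal.ofReal (1/16) else 0)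
      = ENNReal.ofReal (1/16) := by
    rw [tsum_eq_single ((0,0) : ℕ × ℕ)]
    · rw [if_pos rfl]
    · intro p hp; rw [if_neg hp]
  rw [hsingle] at this
  have h116 : (ENNReal.ofReal (15/16)) + ENNReal.ofReal (1/16) = 1 := by
    rw [← ENNReal.ofReal_add (by norm_num) (by norm_num)]
    norm_num
  have hfin : ENNReal.ofReal (1/16) ≠ ⊤ := ENNReal.ofReal_ne_top
  exact (ENNReal.add_left_inj hfin).mp (this.trans h116.symm)

/-! ### Digit-pair counting along the orbit, covers and bounds -/

noncomputable def Zx (m : ℕ) (x : ℝ) : ℕ :=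
  ∑ j ∈ Finset.range m, if cfDigit (2*j) x = 1 ∧ cfDigit (2*j+1) x = 1 then 1 else 0

lemma Zv_eq_Zx {x : ℝ} (hx : x ∈ Ioo (0:ℝ) 1) (h : Irrational x) (m : ℕ) :
    Zv (fun i : Fin m => digitPair x i) = Zx m x := by
  unfold Zv Zx
  rw [Fin.sum_univ_eq_sum_range (fun j => if digitPair x j = (0,0) then 1 else 0) m]
  apply Finset.sum_congr rfl
  intro j _
  have hD : ∀ k : ℕ, 1 ≤ cfDigit k x := fun k =>
    cfDigit_pos (Ioo_subset_Icc_self hx) (irr_ne_zero (orbit_irr hx h k).2)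
  have e : (digitPair x j = (0,0)) ↔ (cfDigit (2*j) x = 1 ∧ cfDigit (2*j+1) x = 1) := by
    unfold digitPair
    rw [Prod.mk.injEq]
    constructor
    · rintro ⟨h1, h2⟩
      exact ⟨by have := hD (2*j); omega, by have := hD (2*j+1); omega⟩
    · rintro ⟨h1, h2⟩
      omega
  exact if_congr e rfl rfl

lemma one_le_RL_pow {j Z : ℕ} (hZ : j + 1 ≤ Z) :
    (1:ENNReal) ≤ (ENNReal.ofReal (10/13))^(j+1) * (ENNReal.ofReal (13/10))^Z := by
  have hcc : ENNReal.ofReal (10/13) * ENNReal.ofReal (13/10) = 1 := by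
    rw [← ENNReal.ofReal_mul (by norm_num)]
    norm_num
  calc (1:ENNReal) = (ENNReal.ofReal (10/13) * ENNReal.ofReal (13/10))^(j+1) := by
        rw [hcc, one_pow]
    _ = (ENNReal.ofReal (10/13))^(j+1) * (ENNReal.ofReal (13/10))^(j+1) := mul_pow _ _ _
    _ ≤ (ENNReal.ofReal (10/13))^(j+1) * (ENNReal.ofReal (13/10))^Z := by
        apply mul_le_mul_right
        exact pow_le_pow_right₀ (ENNReal.one_le_ofReal.mpr (by norm_num)) hZ

lemma one_le_qA_pow {j Z : ℕ} (hZ : Z ≤ j) :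
    (1:ENNReal) ≤ (ENNReal.ofReal (4/3))^j * (ENNReal.ofReal (3/4))^Z := by
  have hcc : ENNReal.ofReal (4/3) * ENNReal.ofReal (3/4) = 1 := by
    rw [← ENNReal.ofReal_mul (by norm_num)]
    norm_num
  calc (1:ENNReal) = (ENNReal.ofReal (4/3) * ENNReal.ofReal (3/4))^Z := by
        rw [hcc, one_pow]
    _ = (ENNReal.ofReal (4/3))^Z * (ENNReal.ofReal (3/4))^Z := mul_pow _ _ _
    _ ≤ (ENNReal.ofReal (4/3))^j * (ENNReal.ofReal (3/4))^Z := by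
        apply mul_le_mul_left
        exact pow_le_pow_right₀ (ENNReal.one_le_ofReal.mpr (by norm_num)) hZ

lemma cover_bound_vol (j : ℕ) :
    volume {x : ℝ | x ∈ Ioo (0:ℝ) 1 ∧ Irrational x ∧ j + 1 ≤ Zx (5*j) x}
      ≤ ENNReal.ofReal (10/13) * (ENNReal.ofReal ((10/13) * (21/20)^5))^j := by
  classical
  have hcover : {x : ℝ | x ∈ Ioo (0:ℝ) 1 ∧ Irrational x ∧ j + 1 ≤ Zx (5*j) x}
      ⊆ ⋃ (v : Fin (5*j) → ℕ × ℕ) (_ : j + 1 ≤ Zv v), Cyl (List.ofFn v) := by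
    rintro x ⟨hx, hirr, hZ⟩
    apply Set.mem_iUnion.mpr
    refine ⟨fun i => digitPair x i, Set.mem_iUnion.mpr ⟨?_, ?_⟩⟩
    · rw [Zv_eq_Zx hx hirr]; exact hZ
    · exact mem_Cyl_of_irr hx hirr (5*j)
  refine le_trans (measure_mono hcover) (le_trans (measure_iUnion_le _) ?_)
  have hle1 : ∀ v : Fin (5*j) → ℕ × ℕ,
      volume (⋃ (_ : j + 1 ≤ Zv v), Cyl (List.ofFn v))
        ≤ (ENNReal.ofReal (10/13))^(j+1)
          * ((ENNReal.ofReal (13/10))^(Zv v) * volume (Cyl (List.ofFn v))) := by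
    intro v
    by_cases h : j + 1 ≤ Zv v
    · simp only [h, Set.iUnion_true]
      calc volume (Cyl (List.ofFn v)) = 1 * volume (Cyl (List.ofFn v)) := (one_mul _).symm
        _ ≤ ((ENNReal.ofReal (10/13))^(j+1) * (ENNReal.ofReal (13/10))^(Zv v))
            * volume (Cyl (List.ofFn v)) := mul_le_mul_left (one_le_RL_pow h) _
        _ = (ENNReal.ofReal (10/13))^(j+1)
            * ((ENNReal.ofReal (13/10))^(Zv v) * volume (Cyl (List.ofFn v))) := by ring
    · simp only [h, Set.iUnion_false]
      simp
  refine le_trans (ENNReal.tsum_le_tsum hle1) ?_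
  rw [ENNReal.tsum_mul_left]
  calc (ENNReal.ofReal (10/13))^(j+1)
        * ∑' v : Fin (5*j) → ℕ × ℕ, (ENNReal.ofReal (13/10))^(Zv v) * volume (Cyl (List.ofFn v))
      ≤ (ENNReal.ofReal (10/13))^(j+1) * (ENNReal.ofReal (21/20))^(5*j) :=
        mul_le_mul_right (H_bound (5*j)) _
    _ = ENNReal.ofReal (10/13) * (ENNReal.ofReal ((10/13) * (21/20)^5))^j := by
        rw [pow_succ, ENNReal.ofReal_mul (by norm_num : (0:ℝ) ≤ 10/13),
          ENNReal.ofReal_pow (by norm_num : (0:ℝ) ≤ 21/20), mul_pow, ← pow_mul]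
        ring_nf

lemma mu_Ioc {μ : Measure ℝ}
    (hdist : ∀ x ∈ Icc (0:ℝ) 1, μ (Icc 0 x) = ENNReal.ofReal (mink x))
    {c d : ℝ} (hc : 0 ≤ c) (hcd : c ≤ d) (hd : d ≤ 1) :
    μ (Ioc c d) = ENNReal.ofReal (mink d) - ENNReal.ofReal (mink c) := by
  have hset : Ioc c d = Icc 0 d \ Icc 0 c := by
    ext x
    constructor
    · rintro ⟨h1, h2⟩
      exact ⟨⟨le_trans hc h1.le, h2⟩, fun hmem => absurd hmem.2 (not_le.mpr h1)⟩
    · rintro ⟨⟨h0, h2⟩, h3⟩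
      refine ⟨?_, h2⟩
      by_contra hle
      push_neg at hle
      exact h3 ⟨h0, hle⟩
  rw [hset, measure_diff (Icc_subset_Icc le_rfl hcd) measurableSet_Icc.nullMeasurableSet
    (by rw [hdist c ⟨hc, le_trans hcd hd⟩]; exact ENNReal.ofReal_ne_top),
    hdist d ⟨le_trans hc hcd, hd⟩, hdist c ⟨hc, le_trans hcd hd⟩]

lemma mu_Cyl_le {μ : Measure ℝ}
    (hdist : ∀ x ∈ Icc (0:ℝ) 1, μ (Icc 0 x) = ENNReal.ofReal (mink x))
    (L : List (ℕ × ℕ)) : μ (Cyl L) ≤ ENNReal.ofReal (wL L) := by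
  have h0 : gm L 0 ∈ Icc (0:ℝ) 1 := gm_mem L ⟨le_rfl, zero_le_one⟩
  have h1 : gm L 1 ∈ Icc (0:ℝ) 1 := gm_mem L ⟨zero_le_one, le_rfl⟩
  have hlt : gm L 0 < gm L 1 := gm_lt L ⟨le_rfl, zero_le_one⟩ ⟨zero_le_one, le_rfl⟩ one_pos
  calc μ (Cyl L) ≤ μ (Ioc (gm L 0) (gm L 1)) := by
        apply measure_mono
        rw [Cyl_eq_Ioo]
        exact Ioo_subset_Ioc_self
    _ = ENNReal.ofReal (mink (gm L 1)) - ENNReal.ofReal (mink (gm L 0)) :=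
        mu_Ioc hdist h0.1 hlt.le h1.2
    _ ≤ ENNReal.ofReal (mink (gm L 1) - mink (gm L 0)) := ofReal_sub_le _ _
    _ = ENNReal.ofReal (wL L) := by rw [mink_gm_diff]

lemma cover_bound_mu {μ : Measure ℝ}
    (hdist : ∀ x ∈ Icc (0:ℝ) 1, μ (Icc 0 x) = ENNReal.ofReal (mink x)) (j : ℕ) :
    μ {x : ℝ | x ∈ Ioo (0:ℝ) 1 ∧ Irrational x ∧ Zx (5*j) x ≤ j}
      ≤ (ENNReal.ofReal ((4/3) * (15/16)^5))^j := by
  classical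
  have hcover : {x : ℝ | x ∈ Ioo (0:ℝ) 1 ∧ Irrational x ∧ Zx (5*j) x ≤ j}
      ⊆ ⋃ (v : Fin (5*j) → ℕ × ℕ) (_ : Zv v ≤ j), Cyl (List.ofFn v) := by
    rintro x ⟨hx, hirr, hZ⟩
    apply Set.mem_iUnion.mpr
    refine ⟨fun i => digitPair x i, Set.mem_iUnion.mpr ⟨?_, ?_⟩⟩
    · rw [Zv_eq_Zx hx hirr]; exact hZ
    · exact mem_Cyl_of_irr hx hirr (5*j)
  refine le_trans (measure_mono hcover) (le_trans (measure_iUnion_le _) ?_)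
  have hle1 : ∀ v : Fin (5*j) → ℕ × ℕ,
      μ (⋃ (_ : Zv v ≤ j), Cyl (List.ofFn v))
        ≤ (ENNReal.ofReal (4/3))^j * ∏ i, phiMu (v i) := by
    intro v
    by_cases h : Zv v ≤ j
    · simp only [h, Set.iUnion_true]
      calc μ (Cyl (List.ofFn v)) ≤ ENNReal.ofReal (wL (List.ofFn v)) := mu_Cyl_le hdist _
        _ = 1 * ENNReal.ofReal (wL (List.ofFn v)) := (one_mul _).symm
        _ ≤ ((ENNReal.ofReal (4/3))^j * (ENNReal.ofReal (3/4))^(Zv v))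
            * ENNReal.ofReal (wL (List.ofFn v)) := mul_le_mul_left (one_le_qA_pow h) _
        _ = (ENNReal.ofReal (4/3))^j * ∏ i, phiMu (v i) := by
            rw [prod_phiMu]
            ring
    · simp only [h, Set.iUnion_false]
      simp
  refine le_trans (ENNReal.tsum_le_tsum hle1) ?_
  rw [ENNReal.tsum_mul_left, tsum_prod_pow phiMu (5*j), tsum_phiMu]
  rw [ENNReal.ofReal_mul (by norm_num : (0:ℝ) ≤ 4/3),
    ENNReal.ofReal_pow (by norm_num : (0:ℝ) ≤ 15/16), mul_pow, ← pow_mul]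

/-! ### Measurability -/

lemma measurable_gauss : Measurable gaussMap := by
  unfold gaussMap
  exact Measurable.ite (measurableSet_eq) measurable_const
    (measurable_fract.comp measurable_inv)

lemma measurable_cfDigit (k : ℕ) : Measurable fun x : ℝ => cfDigit k x :=
  Nat.measurable_floor.comp (measurable_inv.comp (measurable_gauss.iterate k))

lemma measurable_Zx (m : ℕ) : Measurable (Zx m) := by
  unfold Zx
  apply Finset.measurable_sum
  intro j _
  have h1 : MeasurableSet {x : ℝ | cfDigit (2*j) x = 1} :=
    measurable_cfDigit (2*j) (measurableSet_singleton 1)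
  have h2 : MeasurableSet {x : ℝ | cfDigit (2*j+1) x = 1} :=
    measurable_cfDigit (2*j+1) (measurableSet_singleton 1)
  exact Measurable.ite (h1.inter h2) measurable_const measurable_const

end MinkSing

open MinkSing

/-- The Minkowski–Stieltjes measure is singular with respect to Lebesgue measure. -/
theorem minkMeasure_singular (μ : Measure ℝ) [IsProbabilityMeasure μ]
    (hdist : ∀ x ∈ Icc (0 : ℝ) 1, μ (Icc 0 x) = ENNReal.ofReal (mink x))
    (hsupp : μ (Icc (0 : ℝ) 1) = 1) :
    μ ⟂ₘ (volume : Measure ℝ) := by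
  classical
  set qA := ENNReal.ofReal ((4/3) * (15/16)^5) with hqA
  set rB := ENNReal.ofReal ((10/13) * (21/20)^5) with hrB
  have hqA1 : qA < 1 := ENNReal.ofReal_lt_one.mpr (by norm_num)
  have hrB1 : rB < 1 := ENNReal.ofReal_lt_one.mpr (by norm_num)
  set S : Set ℝ := (Ioc (0:ℝ) 1)ᶜ ∪ ((Ioc (0:ℝ) 1) ∩ (Set.range ((↑) : ℚ → ℝ))ᶜ
      ∩ ⋃ j₀ : ℕ, ⋂ j : ℕ, ⋂ (_ : j₀ ≤ j), {x | Zx (5*j) x ≤ j}) with hS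
  refine ⟨S, ?_, ?_, ?_⟩
  · -- measurability
    apply MeasurableSet.union measurableSet_Ioc.compl
    apply MeasurableSet.inter
    · exact measurableSet_Ioc.inter (Set.countable_range _).measurableSet.compl
    · apply MeasurableSet.iUnion
      intro j₀
      apply MeasurableSet.iInter
      intro j
      apply MeasurableSet.iInter
      intro _
      exact measurable_Zx (5*j) (measurableSet_Iic : MeasurableSet (Iic j))
  · -- μ S = 0
    apply measure_union_null
    · -- μ (Ioc 0 1)ᶜ = 0
      have hIcc : μ (Icc (0:ℝ) 1)ᶜ = 0 := by
        have h := measure_compl (measurableSet_Icc : MeasurableSet (Icc (0:ℝ) 1))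
          (by rw [hsupp]; exact ENNReal.one_ne_top)
        rw [hsupp, measure_univ] at h
        simpa using h
      have h0 : μ {(0:ℝ)} = 0 := by
        have h1 : μ {(0:ℝ)} ≤ μ (Icc (0:ℝ) 0) := measure_mono (by simp)
        rw [hdist 0 ⟨le_rfl, zero_le_one⟩, mink_zero, ENNReal.ofReal_zero] at h1
        exact le_antisymm h1 (zero_le ..)
      refine measure_mono_null (fun x hx => ?_) (measure_union_null hIcc h0)
      ·
        simp only [Set.mem_compl_iff, Set.mem_Ioc, not_and_or, not_le, not_lt] at hx
        by_cases hmem : x ∈ Icc (0:ℝ) 1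
        · right
          rcases hx with h | h
          · have := hmem.1
            simp only [Set.mem_singleton_iff]
            linarith
          · exact absurd hmem.2 (not_le.mpr h)
        · exact Or.inl hmem
    · -- the eventually-small part
      refine measure_mono_null (fun x hx => ?_)
        (?_ : μ (⋃ j₀ : ℕ, (Ioc (0:ℝ) 1) ∩ (Set.range ((↑) : ℚ → ℝ))ᶜ
          ∩ ⋂ j : ℕ, ⋂ (_ : j₀ ≤ j), {x | Zx (5*j) x ≤ j}) = 0)
      · obtain ⟨hx1, hx2⟩ := hx
        obtain ⟨j₀, hj₀⟩ := Set.mem_iUnion.mp hx2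
        exact Set.mem_iUnion.mpr ⟨j₀, ⟨hx1, hj₀⟩⟩
      apply measure_iUnion_null
      intro j₀
      have hEle : ∀ j : ℕ, j₀ ≤ j → μ ((Ioc (0:ℝ) 1) ∩ (Set.range ((↑) : ℚ → ℝ))ᶜ
          ∩ ⋂ j' : ℕ, ⋂ (_ : j₀ ≤ j'), {x | Zx (5*j') x ≤ j'}) ≤ qA^j := by
        intro j hj
        refine le_trans (measure_mono ?_) (cover_bound_mu hdist j)
        rintro x ⟨⟨hx1, hx2⟩, hx3⟩
        have hirr : Irrational x := hx2
        have hne1 : x ≠ 1 := by simpa using hirr.ne_int 1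
        refine ⟨⟨hx1.1, lt_of_le_of_ne hx1.2 hne1⟩, hirr, ?_⟩
        have := Set.mem_iInter.mp hx3 j
        exact Set.mem_iInter.mp this hj
      have htend : Filter.Tendsto (fun j : ℕ => qA^j) Filter.atTop (nhds 0) :=
        ENNReal.tendsto_pow_atTop_nhds_zero_of_lt_one hqA1
      have hle0 : μ ((Ioc (0:ℝ) 1) ∩ (Set.range ((↑) : ℚ → ℝ))ᶜ
          ∩ ⋂ j' : ℕ, ⋂ (_ : j₀ ≤ j'), {x | Zx (5*j') x ≤ j'}) ≤ 0 := by
        refine le_of_tendsto_of_tendsto tendsto_const_nhds htend ?_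
        filter_upwards [Filter.eventually_ge_atTop j₀] with j hj using hEle j hj
      exact le_antisymm hle0 (zero_le ..)
  · -- volume Sᶜ = 0
    have hsub : Sᶜ ⊆ (Set.range ((↑) : ℚ → ℝ))
        ∪ ⋂ J : ℕ, ⋃ i : ℕ, {x : ℝ | x ∈ Ioo (0:ℝ) 1 ∧ Irrational x
            ∧ (J+i) + 1 ≤ Zx (5*(J+i)) x} := by
      intro x hx
      rw [hS, Set.compl_union, Set.mem_inter_iff, compl_compl] at hx
      obtain ⟨hx1, hx2⟩ := hx
      by_cases hrat : x ∈ Set.range ((↑) : ℚ → ℝ)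
      · exact Or.inl hrat
      · right
        have hirr : Irrational x := hrat
        have hne1 : x ≠ 1 := by simpa using hirr.ne_int 1
        have hxIoo : x ∈ Ioo (0:ℝ) 1 := ⟨hx1.1, lt_of_le_of_ne hx1.2 hne1⟩
        apply Set.mem_iInter.mpr
        intro J
        have hx3 : x ∉ ⋃ j₀ : ℕ, ⋂ j : ℕ, ⋂ (_ : j₀ ≤ j), {x | Zx (5*j) x ≤ j} := by
          intro hmem
          exact hx2 ⟨⟨hx1, hrat⟩, hmem⟩
        rw [Set.mem_iUnion] at hx3
        push_neg at hx3
        have hJ := hx3 J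
        rw [Set.mem_iInter] at hJ
        push_neg at hJ
        obtain ⟨j, hj⟩ := hJ
        rw [Set.mem_iInter] at hj
        push_neg at hj
        obtain ⟨hjJ, hjZ⟩ := hj
        refine Set.mem_iUnion.mpr ⟨j - J, ?_⟩
        have hJj : J + (j - J) = j := by omega
        rw [hJj]
        exact ⟨hxIoo, hirr, by simpa using Nat.succ_le_of_lt (not_le.mp hjZ)⟩
    apply measure_mono_null hsub
    apply measure_union_null
    · exact Set.Countable.measure_zero (Set.countable_range _) _
    · set C := ENNReal.ofReal (10/13) * (1 - rB)⁻¹ with hC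
      have hCne : C ≠ ⊤ := by
        apply ENNReal.mul_ne_top ENNReal.ofReal_ne_top
        rw [ENNReal.inv_ne_top]
        intro h0
        rw [tsub_eq_zero_iff_le] at h0
        exact absurd h0 (not_le.mpr hrB1)
      have hJb : ∀ J : ℕ, volume (⋂ J' : ℕ, ⋃ i : ℕ, {x : ℝ | x ∈ Ioo (0:ℝ) 1 ∧ Irrational x
          ∧ (J'+i) + 1 ≤ Zx (5*(J'+i)) x}) ≤ C * rB^J := by
        intro J
        refine le_trans (measure_mono (Set.iInter_subset _ J)) ?_
        refine le_trans (measure_iUnion_le _) ?_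
        have hterm : ∀ i : ℕ, volume {x : ℝ | x ∈ Ioo (0:ℝ) 1 ∧ Irrational x
            ∧ (J+i) + 1 ≤ Zx (5*(J+i)) x} ≤ ENNReal.ofReal (10/13) * (rB^J * rB^i) := by
          intro i
          refine le_trans (cover_bound_vol (J+i)) ?_
          rw [← pow_add]
        refine le_trans (ENNReal.tsum_le_tsum hterm) ?_
        rw [ENNReal.tsum_mul_left, ENNReal.tsum_mul_left, ENNReal.tsum_geometric]
        rw [hC]
        ring_nf
        exact le_rfl
      have htend : Filter.Tendsto (fun J : ℕ => C * rB^J) Filter.atTop (nhds 0) := by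
        have h1 : Filter.Tendsto (fun J : ℕ => rB^J) Filter.atTop (nhds 0) :=
          ENNReal.tendsto_pow_atTop_nhds_zero_of_lt_one hrB1
        have := ENNReal.Tendsto.const_mul h1 (Or.inr hCne)
        simpa using this
      have hle0 := le_of_tendsto_of_tendsto' tendsto_const_nhds htend hJb
      exact le_antisymm hle0 (zero_le ..)
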